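/- arXiv:0907.3438 — 9 statements merged into one kernel-verified Lean document; each statement's English description precedes it below -/
import Mathlib

section
/- The Babuška inf-sup constant γ := inf over (u,p) ∈ V × Q with (u,p) ≠ (0,0) of sup over (v,q) ∈ V × Q with (v,q) ≠ (0,0) of (a(u,v) + b(v,p) + b(u,q)) / (‖(u,p)‖·‖(v,q)‖) satisfies γ = min{ |λ| : λ ∈ ℝ and there exists (u,p) ∈ V × Q with (u,p) ≠ (0,0) such that a(u,v) + b(v,p) + b(u,q) = λ(⟨u,v⟩ + ⟨p,q⟩) for all (v,q) ∈ V × Q }; in particular this set of eigenvalues is nonempty and the minimum is attained. -/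
open scoped InnerProductSpace


section General
variable {E : Type*} [NormedAddCommGroup E] [InnerProductSpace ℝ E]
  [FiniteDimensional ℝ E] [Nontrivial E]

theorem sup_eq_norm_div (T : E →ₗ[ℝ] E) (w : E) (hw : w ≠ 0) :
    (⨆ w' : {w' : E // w' ≠ 0}, ⟪T w, w'.1⟫_ℝ / (‖w‖ * ‖w'.1‖)) = ‖T w‖ / ‖w‖ := by
  have hwpos : 0 < ‖w‖ := norm_pos_iff.mpr hw
  have hub : ∀ w' : {w' : E // w' ≠ 0},
      ⟪T w, w'.1⟫_ℝ / (‖w‖ * ‖w'.1‖) ≤ ‖T w‖ / ‖w‖ := by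
    rintro ⟨w', hw'⟩
    have hw'pos : 0 < ‖w'‖ := norm_pos_iff.mpr hw'
    show ⟪T w, w'⟫_ℝ / (‖w‖ * ‖w'‖) ≤ ‖T w‖ / ‖w‖
    rw [div_le_div_iff₀ (by positivity) hwpos]
    calc ⟪T w, w'⟫_ℝ * ‖w‖ ≤ ‖T w‖ * ‖w'‖ * ‖w‖ :=
          mul_le_mul_of_nonneg_right (real_inner_le_norm _ _) (norm_nonneg _)
      _ = ‖T w‖ * (‖w‖ * ‖w'‖) := by ring
  have hbdd : BddAbove (Set.range fun w' : {w' : E // w' ≠ 0} =>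
      ⟪T w, w'.1⟫_ℝ / (‖w‖ * ‖w'.1‖)) :=
    ⟨‖T w‖ / ‖w‖, by rintro x ⟨w', rfl⟩; exact hub w'⟩
  haveI hne : Nonempty {w' : E // w' ≠ 0} := ⟨⟨w, hw⟩⟩
  apply le_antisymm (ciSup_le hub)
  by_cases hTw : T w = 0
  · calc ‖T w‖ / ‖w‖ = ⟪T w, (⟨w, hw⟩ : {w' : E // w' ≠ 0}).1⟫_ℝ / (‖w‖ * ‖w‖) := by
          rw [hTw]; simp
      _ ≤ _ := le_ciSup hbdd ⟨w, hw⟩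
  · have hT0 : 0 < ‖T w‖ := norm_pos_iff.mpr hTw
    calc ‖T w‖ / ‖w‖
        = ⟪T w, (⟨T w, hTw⟩ : {w' : E // w' ≠ 0}).1⟫_ℝ / (‖w‖ * ‖T w‖) := by
          show ‖T w‖ / ‖w‖ = ⟪T w, T w⟫_ℝ / (‖w‖ * ‖T w‖)
          rw [real_inner_self_eq_norm_sq]
          field_simp
      _ ≤ _ := le_ciSup hbdd ⟨T w, hTw⟩

theorem general_infsup (T : E →ₗ[ℝ] E) (hT : LinearMap.IsSymmetric T) :
    IsLeast {r : ℝ | ∃ μ : ℝ, r = |μ| ∧ ∃ w : E, w ≠ 0 ∧ T w = μ • w}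
      (⨅ w : {w : E // w ≠ 0}, ⨆ w' : {w' : E // w' ≠ 0},
        ⟪T w.1, w'.1⟫_ℝ / (‖w.1‖ * ‖w'.1‖)) := by
  have hfin : Module.finrank ℝ E = Module.finrank ℝ E := rfl
  set n := Module.finrank ℝ E with hn
  have hnpos : 0 < n := Module.finrank_pos
  haveI : Nonempty (Fin n) := ⟨⟨0, hnpos⟩⟩
  set B := hT.eigenvectorBasis hfin with hB
  set μ := hT.eigenvalues hfin with hμ
  obtain ⟨i₀, _, hi₀⟩ := Finset.exists_min_image Finset.univ (fun i => |μ i|)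
    ⟨⟨0, hnpos⟩, Finset.mem_univ _⟩
  have hrepr : ∀ (x : E) (i : Fin n), B.repr (T x) i = μ i * B.repr x i := by
    intro x i
    rw [B.repr_apply_apply, B.repr_apply_apply, ← hT, hT.apply_eigenvectorBasis hfin i,
      real_inner_smul_left]
    norm_cast
  have hlow : ∀ x : E, |μ i₀| * ‖x‖ ≤ ‖T x‖ := by
    intro x
    have h1 : (|μ i₀| * ‖x‖) ^ 2 ≤ ‖T x‖ ^ 2 := by
      rw [mul_pow, ← B.repr.norm_map x, ← B.repr.norm_map (T x),
        EuclideanSpace.norm_eq, EuclideanSpace.norm_eq,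
        Real.sq_sqrt (by positivity), Real.sq_sqrt (by positivity),
        Finset.mul_sum]
      apply Finset.sum_le_sum
      intro i _
      rw [hrepr x i]
      calc |μ i₀| ^ 2 * ‖B.repr x i‖ ^ 2 ≤ |μ i| ^ 2 * ‖B.repr x i‖ ^ 2 :=
            mul_le_mul_of_nonneg_right
              (pow_le_pow_left₀ (abs_nonneg _) (hi₀ i (Finset.mem_univ i)) 2)
              (by positivity)
        _ = ‖μ i * B.repr x i‖ ^ 2 := by
            rw [norm_mul, mul_pow, Real.norm_eq_abs, Real.norm_eq_abs]
    exact le_of_pow_le_pow_left₀ two_ne_zero (norm_nonneg _) h1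
  -- rewrite the inf-sup using sup_eq_norm_div
  have hsup : (⨅ w : {w : E // w ≠ 0}, ⨆ w' : {w' : E // w' ≠ 0},
        ⟪T w.1, w'.1⟫_ℝ / (‖w.1‖ * ‖w'.1‖))
      = ⨅ w : {w : E // w ≠ 0}, ‖T w.1‖ / ‖w.1‖ :=
    iInf_congr fun w => sup_eq_norm_div T w.1 w.2
  rw [hsup]
  have hle : ∀ w : {w : E // w ≠ 0}, |μ i₀| ≤ ‖T w.1‖ / ‖w.1‖ := fun w =>
    (le_div_iff₀ (norm_pos_iff.mpr w.2)).mpr (hlow w.1)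
  haveI : Nonempty {w : E // w ≠ 0} := by
    obtain ⟨x, hx⟩ := exists_ne (0 : E)
    exact ⟨⟨x, hx⟩⟩
  have hbddB : BddBelow (Set.range fun w : {w : E // w ≠ 0} => ‖T w.1‖ / ‖w.1‖) :=
    ⟨|μ i₀|, by rintro x ⟨w, rfl⟩; exact hle w⟩
  have hBne : B i₀ ≠ 0 := by
    intro h
    have := B.orthonormal.1 i₀
    rw [h, norm_zero] at this; norm_num at this
  have heig : T (B i₀) = μ i₀ • B i₀ := hT.apply_eigenvectorBasis hfin i₀
  have hval : ‖T (B i₀)‖ / ‖B i₀‖ = |μ i₀| := by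
    rw [heig, norm_smul, Real.norm_eq_abs, B.orthonormal.1 i₀]
    simp
  have hinf : (⨅ w : {w : E // w ≠ 0}, ‖T w.1‖ / ‖w.1‖) = |μ i₀| := by
    apply le_antisymm
    · exact le_of_le_of_eq (ciInf_le hbddB ⟨B i₀, hBne⟩) hval
    · exact le_ciInf hle
  constructor
  · exact ⟨μ i₀, hinf, B i₀, hBne, heig⟩
  · rintro r ⟨lam, rfl, w, hw, hTw⟩
    rw [hinf]
    have : ‖T w‖ / ‖w‖ = |lam| := by
      rw [hTw, norm_smul, Real.norm_eq_abs,
        mul_div_assoc, div_self (norm_ne_zero_iff.mpr hw), mul_one]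
    calc |μ i₀| ≤ ‖T w‖ / ‖w‖ := hle ⟨w, hw⟩
      _ = |lam| := this

end General


section Inst
variable {V : Type*} [NormedAddCommGroup V] [InnerProductSpace ℝ V] [FiniteDimensional ℝ V]
  {Q : Type*} [NormedAddCommGroup Q] [InnerProductSpace ℝ Q] [FiniteDimensional ℝ Q]

noncomputable def babuskaForm (a : V →ₗ[ℝ] V →ₗ[ℝ] ℝ) (b : V →ₗ[ℝ] Q →ₗ[ℝ] ℝ) :
    WithLp 2 (V × Q) →ₗ[ℝ] WithLp 2 (V × Q) →ₗ[ℝ] ℝ :=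
  LinearMap.mk₂ ℝ (fun w w' => a w.fst w'.fst + b w'.fst w.snd + b w.fst w'.snd)
    (by intro x y z; simp only [WithLp.add_fst, WithLp.add_snd, map_add,
          LinearMap.add_apply]; ring)
    (by intro c x y; simp only [WithLp.smul_fst, WithLp.smul_snd, map_smul,
          LinearMap.smul_apply, smul_eq_mul]; ring)
    (by intro x y z; simp only [WithLp.add_fst, WithLp.add_snd, map_add,
          LinearMap.add_apply]; ring)
    (by intro c x y; simp only [WithLp.smul_fst, WithLp.smul_snd, map_smul,
          LinearMap.smul_apply, smul_eq_mul]; ring)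

noncomputable def babuskaOp (a : V →ₗ[ℝ] V →ₗ[ℝ] ℝ) (b : V →ₗ[ℝ] Q →ₗ[ℝ] ℝ) :
    WithLp 2 (V × Q) →ₗ[ℝ] WithLp 2 (V × Q) :=
  ((InnerProductSpace.toDual ℝ (WithLp 2 (V × Q))).symm.toLinearEquiv.toLinearMap).comp
    ((LinearMap.toContinuousLinearMap.toLinearMap).comp (babuskaForm a b))

theorem babuskaOp_inner (a : V →ₗ[ℝ] V →ₗ[ℝ] ℝ) (b : V →ₗ[ℝ] Q →ₗ[ℝ] ℝ)
    (w w' : WithLp 2 (V × Q)) :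
    ⟪babuskaOp a b w, w'⟫_ℝ = a w.fst w'.fst + b w'.fst w.snd + b w.fst w'.snd := by
  rw [babuskaOp]
  simp only [LinearMap.comp_apply, LinearIsometryEquiv.coe_toLinearEquiv,
    LinearEquiv.coe_coe]
  rw [InnerProductSpace.toDual_symm_apply]
  simp [babuskaForm]

end Inst

section Aux
variable {α β : Type*} (e : α ≃ β)

theorem iInf_comp_equiv' (f : β → ℝ) : (⨅ a, f (e a)) = ⨅ b, f b := by
  rw [iInf, iInf, ← e.surjective.range_comp f]; rfl

theorem iSup_comp_equiv' (f : β → ℝ) : (⨆ a, f (e a)) = ⨆ b, f b := by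
  rw [iSup, iSup, ← e.surjective.range_comp f]; rfl
end Aux

/-- The Babuška inf-sup constant `γ` equals the minimum of `|λ|` over all
eigenvalues `λ` of the generalized eigenvalue problem
`a(u,v) + b(v,p) + b(u,q) = λ(⟨u,v⟩ + ⟨p,q⟩)`; in particular the set of such
eigenvalues is nonempty and the minimum is attained. -/
theorem babuska_infsup_eq_min_abs_eigenvalue
    {V : Type*} [NormedAddCommGroup V] [InnerProductSpace ℝ V]
    [FiniteDimensional ℝ V] [Nontrivial V]
    {Q : Type*} [NormedAddCommGroup Q] [InnerProductSpace ℝ Q]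
    [FiniteDimensional ℝ Q] [Nontrivial Q]
    (a : V →ₗ[ℝ] V →ₗ[ℝ] ℝ) (ha : ∀ u v, a u v = a v u)
    (b : V →ₗ[ℝ] Q →ₗ[ℝ] ℝ) :
    IsLeast
      { r : ℝ | ∃ μ : ℝ, r = |μ| ∧ ∃ up : V × Q, up ≠ 0 ∧
          ∀ (v : V) (q : Q),
            a up.1 v + b v up.2 + b up.1 q
              = μ * ((inner ℝ up.1 v : ℝ) + (inner ℝ up.2 q : ℝ)) }
      (⨅ up : {up : V × Q // up ≠ 0}, ⨆ vq : {vq : V × Q // vq ≠ 0},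
        (a up.1.1 vq.1.1 + b vq.1.1 up.1.2 + b up.1.1 vq.1.2) /
          (Real.sqrt (‖up.1.1‖ ^ 2 + ‖up.1.2‖ ^ 2) *
            Real.sqrt (‖vq.1.1‖ ^ 2 + ‖vq.1.2‖ ^ 2))) := by
  haveI : Nontrivial (WithLp 2 (V × Q)) := by
    obtain ⟨x, y, hxy⟩ := exists_pair_ne (V × Q)
    exact ⟨(WithLp.equiv 2 (V × Q)).symm x, (WithLp.equiv 2 (V × Q)).symm y,
      fun h => hxy ((WithLp.equiv 2 (V × Q)).symm.injective h)⟩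
  set T := babuskaOp a b with hTdef
  have hsym : LinearMap.IsSymmetric T := by
    intro w w'
    rw [babuskaOp_inner, real_inner_comm, babuskaOp_inner, ha]
    ring
  have key := general_infsup T hsym
  -- equivalence between nonzero pairs and nonzero WithLp elements
  let e : {up : V × Q // up ≠ 0} ≃ {w : WithLp 2 (V × Q) // w ≠ 0} :=
    { toFun := fun up => ⟨(WithLp.equiv 2 (V × Q)).symm up.1,
        fun h => up.2 ((WithLp.equiv 2 (V × Q)).symm.injective h)⟩
      invFun := fun w => ⟨WithLp.equiv 2 (V × Q) w.1,
        fun h => w.2 ((WithLp.equiv 2 (V × Q)).injective h)⟩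
      left_inv := fun _ => rfl
      right_inv := fun _ => rfl }
  -- the infimum expressions agree
  have hinf : (⨅ up : {up : V × Q // up ≠ 0}, ⨆ vq : {vq : V × Q // vq ≠ 0},
        (a up.1.1 vq.1.1 + b vq.1.1 up.1.2 + b up.1.1 vq.1.2) /
          (Real.sqrt (‖up.1.1‖ ^ 2 + ‖up.1.2‖ ^ 2) *
            Real.sqrt (‖vq.1.1‖ ^ 2 + ‖vq.1.2‖ ^ 2)))
      = ⨅ w : {w : WithLp 2 (V × Q) // w ≠ 0},
          ⨆ w' : {w' : WithLp 2 (V × Q) // w' ≠ 0},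
            ⟪T w.1, w'.1⟫_ℝ / (‖w.1‖ * ‖w'.1‖) := by
    rw [← iInf_comp_equiv' e]
    apply iInf_congr
    intro up
    rw [← iSup_comp_equiv' e]
    apply iSup_congr
    intro vq
    rw [babuskaOp_inner, WithLp.prod_norm_eq_of_L2, WithLp.prod_norm_eq_of_L2]
    rfl
  rw [hinf]
  -- the eigenvalue sets agree
  have hset : { r : ℝ | ∃ μ : ℝ, r = |μ| ∧ ∃ up : V × Q, up ≠ 0 ∧
          ∀ (v : V) (q : Q),
            a up.1 v + b v up.2 + b up.1 q
              = μ * ((inner ℝ up.1 v : ℝ) + (inner ℝ up.2 q : ℝ)) }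
      = {r : ℝ | ∃ μ : ℝ, r = |μ| ∧ ∃ w : WithLp 2 (V × Q), w ≠ 0 ∧ T w = μ • w} := by
    ext r
    simp only [Set.mem_setOf_eq]
    constructor
    · rintro ⟨μ, rfl, up, hup, hcond⟩
      refine ⟨μ, rfl, (WithLp.equiv 2 (V × Q)).symm up,
        fun h => hup ((WithLp.equiv 2 (V × Q)).symm.injective h), ?_⟩
      apply ext_inner_right ℝ
      intro w'
      rw [babuskaOp_inner, real_inner_smul_left, WithLp.prod_inner_apply]
      exact hcond w'.fst w'.snd
    · rintro ⟨μ, rfl, w, hw, hTw⟩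
      refine ⟨μ, rfl, WithLp.equiv 2 (V × Q) w,
        fun h => hw ((WithLp.equiv 2 (V × Q)).injective h), ?_⟩
      intro v q
      show a w.fst v + b v w.snd + b w.fst q = μ * (⟪w.fst, v⟫_ℝ + ⟪w.snd, q⟫_ℝ)
      calc a w.fst v + b v w.snd + b w.fst q
          = ⟪T w, (WithLp.equiv 2 (V × Q)).symm (v, q)⟫_ℝ :=
            (babuskaOp_inner a b w ((WithLp.equiv 2 (V × Q)).symm (v, q))).symm
        _ = ⟪μ • w, (WithLp.equiv 2 (V × Q)).symm (v, q)⟫_ℝ := by rw [hTw]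
        _ = μ * (⟪w.fst, v⟫_ℝ + ⟪w.snd, q⟫_ℝ) := by
            rw [real_inner_smul_left, WithLp.prod_inner_apply]
            rfl
  rw [hset]
  exact key
end

section
/- Consider the generalized eigenvalue problem: find λ ∈ ℝ and (u,p) ∈ V × Q with (u,p) ≠ (0,0) such that ⟨u,v⟩ + b(v,p) + b(u,q) = -λ⟨p,q⟩ for all (v,q) ∈ V × Q. Then the set of eigenvalues λ of this problem is nonempty, every such eigenvalue satisfies λ ≥ 0, and the Brezzi inf-sup constant β := inf over q ∈ Q with q ≠ 0 of sup over v ∈ V with v ≠ 0 of b(v,q)/(‖v‖·‖q‖) equals the square root of the smallest eigenvalue. -/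
/-- The eigenvalues of the generalized eigenvalue problem
`⟨u,v⟩ + b(v,p) + b(u,q) = -λ⟨p,q⟩` form a nonempty set, are all nonnegative,
and the Brezzi inf-sup constant `β` equals the square root of the smallest one. -/
theorem brezzi_infsup_eq_sqrt_min_eigenvalue
    {V : Type*} [NormedAddCommGroup V] [InnerProductSpace ℝ V]
    [FiniteDimensional ℝ V] [Nontrivial V]
    {Q : Type*} [NormedAddCommGroup Q] [InnerProductSpace ℝ Q]
    [FiniteDimensional ℝ Q] [Nontrivial Q]
    (b : V →ₗ[ℝ] Q →ₗ[ℝ] ℝ) :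
    { μ : ℝ | ∃ up : V × Q, up ≠ 0 ∧
        ∀ (v : V) (q : Q),
          (inner ℝ up.1 v : ℝ) + b v up.2 + b up.1 q
            = -μ * (inner ℝ up.2 q : ℝ) }.Nonempty ∧
    (∀ μ : ℝ, (∃ up : V × Q, up ≠ 0 ∧
        ∀ (v : V) (q : Q),
          (inner ℝ up.1 v : ℝ) + b v up.2 + b up.1 q
            = -μ * (inner ℝ up.2 q : ℝ)) → 0 ≤ μ) ∧
    (∃ μ₀ : ℝ,
      IsLeast
        { μ : ℝ | ∃ up : V × Q, up ≠ 0 ∧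
            ∀ (v : V) (q : Q),
              (inner ℝ up.1 v : ℝ) + b v up.2 + b up.1 q
                = -μ * (inner ℝ up.2 q : ℝ) } μ₀ ∧
      (⨅ q : {q : Q // q ≠ 0}, ⨆ v : {v : V // v ≠ 0},
          b v.1 q.1 / (‖v.1‖ * ‖q.1‖)) = Real.sqrt μ₀) := by
  classical
  -- The operator S : Q → V representing b, i.e. ⟪S q, v⟫ = b v q
  have hs : ∀ (q : Q) (v : V),
      (inner ℝ ((InnerProductSpace.toDual ℝ V).symm (b.flip q).toContinuousLinearMap) v : ℝ)
        = b v q := by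
    intro q v
    rw [InnerProductSpace.toDual_symm_apply]
    simp
  set s : Q → V := fun q => (InnerProductSpace.toDual ℝ V).symm (b.flip q).toContinuousLinearMap
    with hsdef
  have hadd : ∀ q q' : Q, s (q + q') = s q + s q' := by
    intro q q'
    apply ext_inner_right ℝ
    intro v
    simp only [hsdef, map_add, inner_add_left, hs, LinearMap.add_apply]
  have hsmul : ∀ (r : ℝ) (q : Q), s (r • q) = r • s q := by
    intro r q
    apply ext_inner_right ℝ
    intro v
    simp only [hsdef]
    rw [real_inner_smul_left, hs, hs, map_smul, smul_eq_mul]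
  set S : Q →ₗ[ℝ] V := { toFun := s, map_add' := hadd, map_smul' := hsmul } with hSdef
  have hS : ∀ (q : Q) (v : V), (inner ℝ (S q) v : ℝ) = b v q := hs
  set T : Q →ₗ[ℝ] Q := (LinearMap.adjoint S) ∘ₗ S with hTdef
  have hT : ∀ q q' : Q, (inner ℝ (T q) q' : ℝ) = inner ℝ (S q) (S q') := by
    intro q q'
    simp only [hTdef, LinearMap.comp_apply, LinearMap.adjoint_inner_left]
  have hTsymm : T.IsSymmetric := by
    intro x y
    rw [hT, real_inner_comm (T y) x, hT, real_inner_comm]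
  -- characterization of the eigenvalue set
  have key : ∀ μ : ℝ, (∃ up : V × Q, up ≠ 0 ∧
      ∀ (v : V) (q : Q),
        (inner ℝ up.1 v : ℝ) + b v up.2 + b up.1 q = -μ * (inner ℝ up.2 q : ℝ))
      ↔ ∃ p : Q, p ≠ 0 ∧ T p = μ • p := by
    intro μ
    constructor
    · rintro ⟨⟨u, p⟩, hne, h⟩
      have hu : u = -S p := by
        apply ext_inner_right ℝ
        intro v
        have := h v 0
        simp only [map_zero, inner_zero_right, mul_zero] at this
        rw [inner_neg_left, hS]
        linarith
      have hp : p ≠ 0 := by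
        intro hp0
        apply hne
        have : u = 0 := by rw [hu, hp0, map_zero, neg_zero]
        simp [Prod.ext_iff, this, hp0]
      refine ⟨p, hp, ?_⟩
      apply ext_inner_right ℝ
      intro q
      have := h 0 q
      simp only [inner_zero_right, map_zero, zero_add, LinearMap.zero_apply] at this
      rw [hu] at this
      rw [← hS q (-S p), inner_neg_right, real_inner_comm] at this
      rw [hT, real_inner_smul_left]
      linarith
    · rintro ⟨p, hp, hTp⟩
      refine ⟨(-S p, p), ?_, ?_⟩
      · intro h0
        exact hp (congrArg Prod.snd h0)
      · intro v q
        have e1 : (inner ℝ (-S p) v : ℝ) = -(b v p) := by rw [inner_neg_left, hS]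
        have e2 : b (-S p) q = -(μ * (inner ℝ p q : ℝ)) := by
          rw [← hS q (-S p), inner_neg_right, real_inner_comm, ← hT, hTp,
            real_inner_smul_left]
        simp only at e1 e2 ⊢
        rw [e1, e2]
        ring
  -- nonnegativity of eigenvalues
  have hnonneg : ∀ (μ : ℝ) (p : Q), p ≠ 0 → T p = μ • p → 0 ≤ μ := by
    intro μ p hp hTp
    have h1 : μ * ‖p‖ ^ 2 = ‖S p‖ ^ 2 := by
      have := hT p p
      rw [hTp, real_inner_smul_left, real_inner_self_eq_norm_sq,
        real_inner_self_eq_norm_sq] at this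
      exact this
    have h2 : (0:ℝ) < ‖p‖ ^ 2 := pow_pos (norm_pos_iff.2 hp) 2
    nlinarith [sq_nonneg ‖S p‖]
  -- minimizer on the sphere
  obtain ⟨x₀, hx₀mem, hx₀min⟩ := (isCompact_sphere (0:Q) 1).exists_isMinOn
    (NormedSpace.sphere_nonempty.2 zero_le_one)
    (((S.continuous_of_finiteDimensional).norm).continuousOn)
  have hx₀norm : ‖x₀‖ = 1 := mem_sphere_zero_iff_norm.1 hx₀mem
  have hx₀ne : x₀ ≠ 0 := by
    intro h0; rw [h0, norm_zero] at hx₀norm; exact zero_ne_one hx₀norm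
  have hmin : ∀ q : Q, q ≠ 0 → ‖S x₀‖ ≤ ‖S q‖ / ‖q‖ := by
    intro q hq
    have hqpos : (0:ℝ) < ‖q‖ := norm_pos_iff.2 hq
    have hq' : ‖q‖⁻¹ • q ∈ Metric.sphere (0:Q) 1 := by
      rw [mem_sphere_zero_iff_norm, norm_smul, norm_inv, norm_norm,
        inv_mul_cancel₀ hqpos.ne']
    have := hx₀min hq'
    simp only [Set.mem_setOf_eq] at this
    calc ‖S x₀‖ ≤ ‖S (‖q‖⁻¹ • q)‖ := this
      _ = ‖S q‖ / ‖q‖ := by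
          rw [map_smul, norm_smul, norm_inv, norm_norm, div_eq_inv_mul]
  haveI hVne : Nonempty {v : V // v ≠ 0} := ⟨⟨Classical.choose (exists_ne (0:V)),
    Classical.choose_spec (exists_ne (0:V))⟩⟩
  haveI hQne : Nonempty {q : Q // q ≠ 0} := ⟨⟨x₀, hx₀ne⟩⟩
  -- the Rayleigh infimum
  set μ₀ : ℝ := ⨅ x : {x : Q // x ≠ 0}, RCLike.re (inner ℝ (T x.1) x.1 : ℝ) / ‖(x.1 : Q)‖ ^ 2
    with hμ₀def
  have hre : ∀ r : ℝ, RCLike.re r = r := fun r => rfl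
  have hR : ∀ x : {x : Q // x ≠ 0},
      RCLike.re (inner ℝ (T x.1) x.1 : ℝ) / ‖(x.1 : Q)‖ ^ 2 = (‖S x.1‖ / ‖x.1‖) ^ 2 := by
    intro x
    rw [hre, hT, real_inner_self_eq_norm_sq, div_pow]
  have hbdd : BddBelow (Set.range fun x : {x : Q // x ≠ 0} =>
      RCLike.re (inner ℝ (T x.1) x.1 : ℝ) / ‖(x.1 : Q)‖ ^ 2) := by
    refine ⟨0, ?_⟩
    rintro y ⟨x, rfl⟩
    dsimp only
    rw [hR x]
    positivity
  have hμ₀eq : μ₀ = ‖S x₀‖ ^ 2 := by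
    apply le_antisymm
    · have := ciInf_le hbdd (⟨x₀, hx₀ne⟩ : {x : Q // x ≠ 0})
      dsimp only at this
      rw [hR ⟨x₀, hx₀ne⟩] at this
      rw [hx₀norm, div_one] at this
      exact this
    · apply le_ciInf
      intro x
      rw [hR]
      have := hmin x.1 x.2
      have h0 : (0:ℝ) ≤ ‖S x₀‖ := norm_nonneg _
      nlinarith
  have heig : Module.End.HasEigenvalue T (μ₀ : ℝ) :=
    hTsymm.hasEigenvalue_iInf_of_finiteDimensional
  obtain ⟨p₀, hp₀⟩ := heig.exists_hasEigenvector
  have hp₀eq : T p₀ = μ₀ • p₀ := hp₀.apply_eq_smul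
  have hp₀ne : p₀ ≠ 0 := hp₀.right
  -- the sup computation
  have hsup : ∀ q : Q, q ≠ 0 →
      (⨆ v : {v : V // v ≠ 0}, b v.1 q / (‖v.1‖ * ‖q‖)) = ‖S q‖ / ‖q‖ := by
    intro q hq
    have hqpos : (0:ℝ) < ‖q‖ := norm_pos_iff.2 hq
    have hub : ∀ v : {v : V // v ≠ 0}, b v.1 q / (‖v.1‖ * ‖q‖) ≤ ‖S q‖ / ‖q‖ := by
      intro v
      have hvpos : (0:ℝ) < ‖v.1‖ := norm_pos_iff.2 v.2
      rw [← hS q v.1]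
      rw [div_le_div_iff₀ (by positivity) hqpos]
      have h1 : (inner ℝ (S q) v.1 : ℝ) ≤ ‖S q‖ * ‖v.1‖ := real_inner_le_norm _ _
      nlinarith
    have hbddA : BddAbove (Set.range fun v : {v : V // v ≠ 0} =>
        b v.1 q / (‖v.1‖ * ‖q‖)) := by
      refine ⟨‖S q‖ / ‖q‖, ?_⟩
      rintro y ⟨v, rfl⟩
      exact hub v
    apply le_antisymm (ciSup_le hub)
    by_cases hSq : S q = 0
    · rw [hSq, norm_zero, zero_div]
      obtain ⟨v⟩ := hVne
      have := le_ciSup hbddA v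
      have hz : b v.1 q / (‖v.1‖ * ‖q‖) = 0 := by
        rw [← hS q v.1, hSq, inner_zero_left, zero_div]
      linarith [this, hz ▸ this]
    · have := le_ciSup hbddA ⟨S q, hSq⟩
      have hSqpos : (0:ℝ) < ‖S q‖ := norm_pos_iff.2 hSq
      have hval : b (S q) q / (‖S q‖ * ‖q‖) = ‖S q‖ / ‖q‖ := by
        rw [← hS q (S q), real_inner_self_eq_norm_sq]
        field_simp
      calc ‖S q‖ / ‖q‖ = b (S q) q / (‖S q‖ * ‖q‖) := hval.symm
        _ ≤ _ := this
  -- the inf computation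
  have hinf : (⨅ q : {q : Q // q ≠ 0}, ⨆ v : {v : V // v ≠ 0},
      b v.1 q.1 / (‖v.1‖ * ‖q.1‖)) = ‖S x₀‖ := by
    have hbddB : BddBelow (Set.range fun q : {q : Q // q ≠ 0} =>
        ⨆ v : {v : V // v ≠ 0}, b v.1 q.1 / (‖v.1‖ * ‖q.1‖)) := by
      refine ⟨0, ?_⟩
      rintro y ⟨q, rfl⟩
      dsimp only
      rw [hsup q.1 q.2]
      positivity
    apply le_antisymm
    · have := ciInf_le hbddB (⟨x₀, hx₀ne⟩ : {q : Q // q ≠ 0})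
      rw [hsup x₀ hx₀ne, hx₀norm, div_one] at this
      exact this
    · apply le_ciInf
      intro q
      rw [hsup q.1 q.2]
      exact hmin q.1 q.2
  refine ⟨⟨μ₀, (key μ₀).2 ⟨p₀, hp₀ne, hp₀eq⟩⟩, ?_, ⟨μ₀, ⟨⟨(key μ₀).2 ⟨p₀, hp₀ne, hp₀eq⟩, ?_⟩, ?_⟩⟩⟩
  · intro μ hμ
    obtain ⟨p, hp, hTp⟩ := (key μ).1 hμ
    exact hnonneg μ p hp hTp
  · intro μ hμ
    obtain ⟨p, hp, hTp⟩ := (key μ).1 hμ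
    have hμval : RCLike.re (inner ℝ (T p) p : ℝ) / ‖p‖ ^ 2 = μ := by
      rw [hre, hTp, real_inner_smul_left, real_inner_self_eq_norm_sq]
      have : (0:ℝ) < ‖p‖ ^ 2 := pow_pos (norm_pos_iff.2 hp) 2
      field_simp
    have := ciInf_le hbdd (⟨p, hp⟩ : {x : Q // x ≠ 0})
    dsimp only at this
    rw [hμval] at this
    exact this
  · rw [hinf, hμ₀eq, Real.sqrt_sq (norm_nonneg _)]
end

section
/- Consider the generalized eigenvalue problem: find λ ∈ ℝ and (u,p) ∈ V × Q with (u,p) ≠ (0,0) such that ⟨u,v⟩ + b(v,p) + b(u,q) = -λ⟨p,q⟩ for all (v,q) ∈ V × Q. If N ≠ Q, then the set of nonzero eigenvalues of this problem is nonempty and the reduced Brezzi inf-sup constant β̃ := inf over q ≠ 0 in the orthogonal complement of N in Q of sup over v ∈ V with v ≠ 0 of b(v,q)/(‖v‖·‖q‖) equals the square root of the smallest nonzero eigenvalue. -/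
/-- If the space of spurious modes `N = {q | b(v,q) = 0 ∀ v}` is a proper subspace
of `Q`, then the generalized eigenvalue problem
`⟨u,v⟩ + b(v,p) + b(u,q) = -λ⟨p,q⟩` has a nonzero eigenvalue, and the reduced
Brezzi inf-sup constant (infimum over nonzero `q` in the orthogonal complement of
`N`) equals the square root of the smallest nonzero eigenvalue. -/
theorem reduced_brezzi_infsup_eq_sqrt_min_nonzero_eigenvalue
    {V : Type*} [NormedAddCommGroup V] [InnerProductSpace ℝ V]
    [FiniteDimensional ℝ V] [Nontrivial V]
    {Q : Type*} [NormedAddCommGroup Q] [InnerProductSpace ℝ Q]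
    [FiniteDimensional ℝ Q] [Nontrivial Q]
    (b : V →ₗ[ℝ] Q →ₗ[ℝ] ℝ)
    (hN : LinearMap.ker b.flip ≠ (⊤ : Submodule ℝ Q)) :
    { μ : ℝ | μ ≠ 0 ∧ ∃ up : V × Q, up ≠ 0 ∧
        ∀ (v : V) (q : Q),
          (inner ℝ up.1 v : ℝ) + b v up.2 + b up.1 q
            = -μ * (inner ℝ up.2 q : ℝ) }.Nonempty ∧
    (∃ μ₀ : ℝ,
      IsLeast
        { μ : ℝ | μ ≠ 0 ∧ ∃ up : V × Q, up ≠ 0 ∧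
            ∀ (v : V) (q : Q),
              (inner ℝ up.1 v : ℝ) + b v up.2 + b up.1 q
                = -μ * (inner ℝ up.2 q : ℝ) } μ₀ ∧
      (⨅ q : {q : Q // q ∈ (LinearMap.ker b.flip)ᗮ ∧ q ≠ 0},
          ⨆ v : {v : V // v ≠ 0},
            b v.1 q.1 / (‖v.1‖ * ‖q.1‖)) = Real.sqrt μ₀) := by
  classical
  -- Riesz representation of `b` in the second argument
  obtain ⟨Bt, hBt⟩ : ∃ Bt : Q →ₗ[ℝ] V, ∀ q v, (inner ℝ (Bt q) v : ℝ) = b v q := by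
    refine ⟨{ toFun := fun q => (InnerProductSpace.toDual ℝ V).symm (LinearMap.toContinuousLinearMap (b.flip q)),
              map_add' := ?_, map_smul' := ?_ }, ?_⟩
    · intro x y; simp [map_add]
    · intro r x; simp [map_smul]
    · intro q v; simp [InnerProductSpace.toDual_symm_apply]
  set N : Submodule ℝ Q := LinearMap.ker b.flip with hNdef
  -- `N` is the kernel of `Bt`
  have hkerBt : ∀ q : Q, q ∈ N ↔ Bt q = 0 := by
    intro q
    constructor
    · intro hq
      have h0 : (inner ℝ (Bt q) (Bt q) : ℝ) = 0 := by
        rw [hBt]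
        have : b.flip q = 0 := hq
        simpa using congrFun (congrArg DFunLike.coe this) (Bt q)
      exact inner_self_eq_zero.mp h0
    · intro hq
      have : ∀ v, b v q = 0 := fun v => by rw [← hBt, hq, inner_zero_left]
      exact LinearMap.mem_ker.mpr (by ext v; simpa using this v)
  -- the operator S = Bt† ∘ Bt
  set S : Q →ₗ[ℝ] Q := (LinearMap.adjoint Bt).comp Bt with hSdef
  have hS : ∀ p q : Q, (inner ℝ (S p) q : ℝ) = inner ℝ (Bt p) (Bt q) := by
    intro p q; simp [hSdef, LinearMap.adjoint_inner_left]
  have hSE : ∀ p : Q, S p ∈ Nᗮ := by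
    intro p
    rw [Submodule.mem_orthogonal]
    intro n hn
    rw [real_inner_comm, hS]
    rw [(hkerBt n).mp hn, inner_zero_right]
  -- the restriction T of S to E = Nᗮ
  set T : Nᗮ →ₗ[ℝ] Nᗮ :=
    LinearMap.codRestrict Nᗮ (S.comp Nᗮ.subtype) (fun x => hSE x) with hTdef
  have hTcoe : ∀ x : Nᗮ, (T x : Q) = S x := fun x => rfl
  have hTsymm : T.IsSymmetric := by
    intro x y
    have h1 : (inner ℝ (T x) y : ℝ) = inner ℝ (Bt (x : Q)) (Bt (y : Q)) := by
      rw [Submodule.coe_inner, hTcoe, hS]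
    have h2 : (inner ℝ x (T y) : ℝ) = inner ℝ (Bt (x : Q)) (Bt (y : Q)) := by
      rw [Submodule.coe_inner, hTcoe, real_inner_comm, hS, real_inner_comm]
    rw [h1, h2]
  have hEnontriv : Nontrivial Nᗮ := by
    rw [Submodule.nontrivial_iff_ne_bot]
    intro h
    exact hN (Submodule.orthogonal_eq_bot_iff.mp h)
  -- minimal eigenvalue via Rayleigh quotient
  set μ₀ : ℝ := ⨅ x : { x : Nᗮ // x ≠ 0 }, RCLike.re (inner ℝ (T x) (x : Nᗮ) : ℝ) / ‖(x : Nᗮ)‖ ^ 2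
    with hμ₀def
  have hre : ∀ r : ℝ, RCLike.re r = r := fun r => rfl
  have hRay : ∀ x : { x : Nᗮ // x ≠ 0 },
      RCLike.re (inner ℝ (T x) (x : Nᗮ) : ℝ) / ‖(x : Nᗮ)‖ ^ 2
        = ‖Bt ((x : Nᗮ) : Q)‖ ^ 2 / ‖((x : Nᗮ) : Q)‖ ^ 2 := by
    intro x
    rw [hre, Submodule.coe_inner, hTcoe, hS, real_inner_self_eq_norm_sq]
    rfl
  have hbdd : BddBelow (Set.range fun x : { x : Nᗮ // x ≠ 0 } =>
      RCLike.re (inner ℝ (T x) (x : Nᗮ) : ℝ) / ‖(x : Nᗮ)‖ ^ 2) := by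
    refine ⟨0, ?_⟩
    rintro r ⟨x, rfl⟩
    dsimp only
    rw [hRay]
    positivity
  have hμ₀le : ∀ x : { x : Nᗮ // x ≠ 0 },
      μ₀ ≤ ‖Bt ((x : Nᗮ) : Q)‖ ^ 2 / ‖((x : Nᗮ) : Q)‖ ^ 2 := by
    intro x
    rw [← hRay]
    exact ciInf_le hbdd x
  have hEig : Module.End.HasEigenvalue T μ₀ :=
    hTsymm.hasEigenvalue_iInf_of_finiteDimensional
  obtain ⟨x₀, hx₀⟩ := hEig.exists_hasEigenvector
  set q₀ : Q := (x₀ : Q) with hq₀def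
  have hq₀E : q₀ ∈ Nᗮ := x₀.2
  have hq₀ne : q₀ ≠ 0 := fun h => hx₀.2 (by exact_mod_cast Subtype.ext h)
  have hSq₀ : S q₀ = μ₀ • q₀ := by
    have := hx₀.apply_eq_smul
    calc S q₀ = ((T x₀ : Nᗮ) : Q) := rfl
    _ = ((μ₀ • x₀ : Nᗮ) : Q) := by rw [this]
    _ = μ₀ • q₀ := rfl
  -- `Bt q ≠ 0` for nonzero `q ∈ Nᗮ`
  have hBtne : ∀ q : Q, q ∈ Nᗮ → q ≠ 0 → Bt q ≠ 0 := by
    intro q hqE hqne h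
    have hqN : q ∈ N := (hkerBt q).mpr h
    have : (inner ℝ q q : ℝ) = 0 := (Submodule.mem_orthogonal Nᗮ q).mp
      (Submodule.le_orthogonal_orthogonal N hqN) q hqE
    exact hqne (inner_self_eq_zero.mp this)
  -- positivity of μ₀
  have hμ₀norm : ‖Bt q₀‖ ^ 2 = μ₀ * ‖q₀‖ ^ 2 := by
    have h1 : (inner ℝ (S q₀) q₀ : ℝ) = μ₀ * ‖q₀‖ ^ 2 := by
      rw [hSq₀, real_inner_smul_left, real_inner_self_eq_norm_sq]
    have h2 : (inner ℝ (S q₀) q₀ : ℝ) = ‖Bt q₀‖ ^ 2 := by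
      rw [hS, real_inner_self_eq_norm_sq]
    rw [← h2, h1]
  have hμ₀pos : 0 < μ₀ := by
    have hb : 0 < ‖Bt q₀‖ ^ 2 := pow_pos (norm_pos_iff.mpr (hBtne q₀ hq₀E hq₀ne)) 2
    have hq : 0 < ‖q₀‖ ^ 2 := pow_pos (norm_pos_iff.mpr hq₀ne) 2
    nlinarith [hμ₀norm]
  -- eigenpairs give solutions of the variational problem
  have hsol : ∀ (μ : ℝ) (p : Q), p ≠ 0 → S p = μ • p →
      ∃ up : V × Q, up ≠ 0 ∧ ∀ (v : V) (q : Q),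
        (inner ℝ up.1 v : ℝ) + b v up.2 + b up.1 q = -μ * (inner ℝ up.2 q : ℝ) := by
    intro μ p hp hSp
    refine ⟨(-(Bt p), p), ?_, ?_⟩
    · simp [Prod.ext_iff, hp]
    · intro v q
      have h1 : (inner ℝ (-(Bt p)) v : ℝ) = -(b v p) := by rw [inner_neg_left, hBt]
      have h2 : b (-(Bt p)) q = -μ * (inner ℝ p q : ℝ) := by
        have : b (Bt p) q = μ * (inner ℝ p q : ℝ) := by
          rw [← hBt, real_inner_comm, ← hS, hSp, real_inner_smul_left]
        rw [map_neg, LinearMap.neg_apply, this]; ring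
      simp only [h1, h2]; ring
  -- solutions of the variational problem give eigenpairs
  have hext : ∀ (μ : ℝ), μ ≠ 0 → ∀ up : V × Q, up ≠ 0 →
      (∀ (v : V) (q : Q),
        (inner ℝ up.1 v : ℝ) + b v up.2 + b up.1 q = -μ * (inner ℝ up.2 q : ℝ)) →
      up.2 ≠ 0 ∧ up.2 ∈ Nᗮ ∧ S up.2 = μ • up.2 := by
    rintro μ hμ ⟨u, p⟩ hup heq
    simp only [Prod.fst, Prod.snd] at heq ⊢
    have hu : u = -(Bt p) := by
      have h0 : ∀ v : V, (inner ℝ (u + Bt p) v : ℝ) = 0 := by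
        intro v
        have := heq v 0
        simp only [map_zero, inner_zero_left, inner_zero_right, mul_zero, add_zero] at this
        rw [inner_add_left, hBt, this]
      have := ext_inner_right ℝ (x := u + Bt p) (y := 0) (by simp [h0])
      linear_combination (norm := abel) this
    have hSp : S p = μ • p := by
      refine ext_inner_right ℝ ?_
      intro q
      have := heq 0 q
      simp only [inner_zero_left, inner_zero_right, map_zero, LinearMap.zero_apply, zero_add] at this
      have hbuq : b u q = (inner ℝ u (Bt q) : ℝ) := by rw [real_inner_comm, hBt]
      rw [hbuq, hu, inner_neg_left, ← hS] at this
      have : (inner ℝ (S p) q : ℝ) = μ * inner ℝ p q := by linarith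
      rw [this, real_inner_smul_left]
    have hp : p ≠ 0 := by
      intro h
      apply hup
      rw [Prod.ext_iff]
      exact ⟨by simp [hu, h], h⟩
    refine ⟨hp, ?_, hSp⟩
    rw [Submodule.mem_orthogonal]
    intro n hn
    have h1 : (inner ℝ (S p) n : ℝ) = 0 := by
      rw [hS, (hkerBt n).mp hn, inner_zero_right]
    rw [hSp, real_inner_smul_left] at h1
    have := mul_eq_zero.mp h1
    rcases this with h | h
    · exact absurd h hμ
    · rw [real_inner_comm]; exact h
  -- μ₀ belongs to the eigenvalue set
  have hμ₀mem : μ₀ ∈ { μ : ℝ | μ ≠ 0 ∧ ∃ up : V × Q, up ≠ 0 ∧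
      ∀ (v : V) (q : Q),
        (inner ℝ up.1 v : ℝ) + b v up.2 + b up.1 q = -μ * (inner ℝ up.2 q : ℝ) } :=
    ⟨ne_of_gt hμ₀pos, hsol μ₀ q₀ hq₀ne hSq₀⟩
  refine ⟨⟨μ₀, hμ₀mem⟩, μ₀, ⟨hμ₀mem, ?_⟩, ?_⟩
  · -- lower bound
    rintro μ ⟨hμ, up, hup, heq⟩
    obtain ⟨hp, hpE, hSp⟩ := hext μ hμ up hup heq
    set p := up.2
    have h := hμ₀le ⟨⟨p, hpE⟩, by simp [hp]⟩
    have hval : ‖Bt p‖ ^ 2 = μ * ‖p‖ ^ 2 := by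
      have h1 : (inner ℝ (S p) p : ℝ) = μ * ‖p‖ ^ 2 := by
        rw [hSp, real_inner_smul_left, real_inner_self_eq_norm_sq]
      have h2 : (inner ℝ (S p) p : ℝ) = ‖Bt p‖ ^ 2 := by
        rw [hS, real_inner_self_eq_norm_sq]
      rw [← h2, h1]
    have hpn : (0:ℝ) < ‖p‖ ^ 2 := pow_pos (norm_pos_iff.mpr hp) 2
    calc μ₀ ≤ ‖Bt p‖ ^ 2 / ‖p‖ ^ 2 := h
    _ = μ := by rw [hval]; field_simp
  · -- the inf-sup identity
    have hsup : ∀ q : {q : Q // q ∈ Nᗮ ∧ q ≠ 0},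
        (⨆ v : {v : V // v ≠ 0}, b v.1 q.1 / (‖v.1‖ * ‖q.1‖)) = ‖Bt q.1‖ / ‖q.1‖ := by
      rintro ⟨q, hqE, hqne⟩
      have hBq : Bt q ≠ 0 := hBtne q hqE hqne
      have hBqn : (0:ℝ) < ‖Bt q‖ := norm_pos_iff.mpr hBq
      have hqn : (0:ℝ) < ‖q‖ := norm_pos_iff.mpr hqne
      rw [iSup]
      apply IsGreatest.csSup_eq
      constructor
      · refine ⟨⟨Bt q, hBq⟩, ?_⟩
        simp only
        rw [← hBt, real_inner_self_eq_norm_sq]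
        field_simp
      · rintro r ⟨⟨v, hv⟩, rfl⟩
        simp only
        have hvn : (0:ℝ) < ‖v‖ := norm_pos_iff.mpr hv
        rw [div_le_div_iff₀ (by positivity) hqn, ← hBt]
        have := real_inner_le_norm (Bt q) v
        nlinarith
    rw [iInf_congr hsup]
    rw [iInf]
    apply IsLeast.csInf_eq
    constructor
    · refine ⟨⟨q₀, hq₀E, hq₀ne⟩, ?_⟩
      simp only
      have hq₀n : (0:ℝ) < ‖q₀‖ := norm_pos_iff.mpr hq₀ne
      have : ‖Bt q₀‖ = Real.sqrt μ₀ * ‖q₀‖ := by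
        have h1 : ‖Bt q₀‖ = Real.sqrt (μ₀ * ‖q₀‖ ^ 2) := by
          rw [← hμ₀norm, Real.sqrt_sq (norm_nonneg _)]
        rw [h1, Real.sqrt_mul (le_of_lt hμ₀pos), Real.sqrt_sq (norm_nonneg _)]
      rw [this]
      field_simp
    · rintro r ⟨⟨q, hqE, hqne⟩, rfl⟩
      simp only
      have hqn : (0:ℝ) < ‖q‖ := norm_pos_iff.mpr hqne
      have h := hμ₀le ⟨⟨q, hqE⟩, by simp [hqne]⟩
      have : Real.sqrt μ₀ ≤ Real.sqrt (‖Bt q‖ ^ 2 / ‖q‖ ^ 2) := Real.sqrt_le_sqrt h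
      have heq2 : Real.sqrt (‖Bt q‖ ^ 2 / ‖q‖ ^ 2) = ‖Bt q‖ / ‖q‖ := by
        rw [← div_pow, Real.sqrt_sq (by positivity)]
      rwa [heq2] at this
end

section
/- Suppose Z ≠ {0}. Then the Brezzi coercivity constant α := inf over u ∈ Z with u ≠ 0 of sup over v ∈ Z with v ≠ 0 of a(u,v)/(‖u‖·‖v‖) equals min{ |λ| : λ ∈ ℝ and there exists u ∈ Z with u ≠ 0 such that a(u,v) = λ⟨u,v⟩ for all v ∈ Z }; in particular this set of eigenvalues is nonempty and the minimum is attained. -/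
open InnerProductSpace Module

section opof
variable {E : Type*} [NormedAddCommGroup E] [InnerProductSpace ℝ E] [FiniteDimensional ℝ E]

variable {E : Type*} [NormedAddCommGroup E] [InnerProductSpace ℝ E] [FiniteDimensional ℝ E]

noncomputable def opOf (B : E →ₗ[ℝ] E →ₗ[ℝ] ℝ) : E →ₗ[ℝ] E where
  toFun u := (toDual ℝ E).symm (LinearMap.toContinuousLinearMap (B u))
  map_add' u v := by simp [map_add]
  map_smul' c u := by
    simp [map_smul, map_smulₛₗ, starRingEnd_apply, star_trivial]

theorem opOf_inner (B : E →ₗ[ℝ] E →ₗ[ℝ] ℝ) (u v : E) :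
    (inner ℝ (opOf B u) v : ℝ) = B u v := by
  simp [opOf, toDual_symm_apply]

end opof


theorem helper {E : Type*} [NormedAddCommGroup E] [InnerProductSpace ℝ E]
    [FiniteDimensional ℝ E] [Nontrivial E]
    (T : E →ₗ[ℝ] E) (hT : T.IsSymmetric) :
    IsLeast {r : ℝ | ∃ μ : ℝ, r = |μ| ∧ ∃ u : E, u ≠ 0 ∧ T u = μ • u}
      (⨅ u : {u : E // u ≠ 0}, ‖T u.1‖ / ‖u.1‖) := by
  set n := finrank ℝ E with hn'
  have hn : finrank ℝ E = n := rfl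
  have hnpos : 0 < n := hn ▸ finrank_pos
  haveI : Nonempty (Fin n) := ⟨⟨0, hnpos⟩⟩
  set B := hT.eigenvectorBasis hn with hB
  set lam := hT.eigenvalues hn with hlam
  obtain ⟨i₀, -, hi₀⟩ := Finset.exists_min_image Finset.univ (fun i => |lam i|)
    ⟨Classical.arbitrary (Fin n), Finset.mem_univ _⟩
  simp only [Finset.mem_univ, forall_true_left] at hi₀
  -- key norm bound
  have key : ∀ u : E, |lam i₀| * ‖u‖ ≤ ‖T u‖ := by
    intro u
    have h1 : ‖u‖ = Real.sqrt (∑ i, (B.repr u i) ^ 2) := by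
      rw [← B.repr.norm_map u, EuclideanSpace.norm_eq]
      congr 1; refine Finset.sum_congr rfl fun i _ => ?_
      rw [Real.norm_eq_abs, sq_abs]
    have h2 : ‖T u‖ = Real.sqrt (∑ i, (lam i * B.repr u i) ^ 2) := by
      rw [← B.repr.norm_map (T u), EuclideanSpace.norm_eq]
      congr 1; refine Finset.sum_congr rfl fun i _ => ?_
      rw [Real.norm_eq_abs, sq_abs, hT.eigenvectorBasis_apply_self_apply hn u i]
      norm_num
      rfl
    rw [h1, h2]
    have habs : |lam i₀| = Real.sqrt ((lam i₀) ^ 2) := (Real.sqrt_sq_eq_abs _).symm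
    rw [habs, ← Real.sqrt_mul (sq_nonneg _)]
    apply Real.sqrt_le_sqrt
    rw [Finset.mul_sum]
    refine Finset.sum_le_sum fun i _ => ?_
    rw [mul_pow]
    apply mul_le_mul_of_nonneg_right _ (sq_nonneg _)
    rw [← sq_abs (lam i₀), ← sq_abs (lam i)]
    exact pow_le_pow_left₀ (abs_nonneg _) (hi₀ i) 2
  have hBne : ∀ i, (B i : E) ≠ 0 := fun i => by simpa using B.toBasis.ne_zero i
  have hub : ∀ u : {u : E // u ≠ 0}, |lam i₀| ≤ ‖T u.1‖ / ‖u.1‖ := fun u => by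
    rw [le_div_iff₀ (norm_pos_iff.mpr u.2)]
    exact key u.1
  haveI : Nonempty {u : E // u ≠ 0} := ⟨⟨B i₀, hBne i₀⟩⟩
  have hbdd : BddBelow (Set.range fun u : {u : E // u ≠ 0} => ‖T u.1‖ / ‖u.1‖) :=
    ⟨|lam i₀|, by rintro r ⟨u, rfl⟩; exact hub u⟩
  have hval : ∀ (μ : ℝ) (u : E), u ≠ 0 → T u = μ • u → ‖T u‖ / ‖u‖ = |μ| := by
    intro μ u hu hTu
    rw [hTu, norm_smul, Real.norm_eq_abs, mul_div_assoc,
      div_self (norm_ne_zero_iff.mpr hu), mul_one]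
  have hTB : T (B i₀) = lam i₀ • B i₀ := by
    exact hT.apply_eigenvectorBasis hn i₀
  have hinf : (⨅ u : {u : E // u ≠ 0}, ‖T u.1‖ / ‖u.1‖) = |lam i₀| := by
    apply le_antisymm
    · exact ciInf_le_of_le hbdd ⟨B i₀, hBne i₀⟩ (le_of_eq (hval _ _ (hBne i₀) hTB))
    · exact le_ciInf hub
  rw [hinf]
  constructor
  · exact ⟨lam i₀, rfl, B i₀, hBne i₀, hTB⟩
  · rintro r ⟨μ, rfl, u, hu, hTu⟩
    calc |lam i₀| ≤ ‖T u‖ / ‖u‖ := hub ⟨u, hu⟩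
    _ = |μ| := hval μ u hu hTu

def kerB {V Q : Type*} [NormedAddCommGroup V] [InnerProductSpace ℝ V]
    [NormedAddCommGroup Q] [InnerProductSpace ℝ Q]
    (b : V →ₗ[ℝ] Q →ₗ[ℝ] ℝ) : Submodule ℝ V where
  carrier := {u | ∀ q, b u q = 0}
  add_mem' := fun hx hy q => by simp_all
  zero_mem' := fun q => by simp
  smul_mem' := fun c x hx q => by simp_all

/-- If `Z = {u | b(u,q) = 0 ∀ q} ≠ {0}`, the Brezzi coercivity constant `α`
equals the minimum of `|λ|` over eigenvalues `λ` of the eigenvalue problem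
`a(u,v) = λ⟨u,v⟩` on `Z`; in particular this eigenvalue set is nonempty and the
minimum is attained. -/
theorem brezzi_coercivity_eq_min_abs_eigenvalue
    {V : Type*} [NormedAddCommGroup V] [InnerProductSpace ℝ V]
    [FiniteDimensional ℝ V] [Nontrivial V]
    {Q : Type*} [NormedAddCommGroup Q] [InnerProductSpace ℝ Q]
    [FiniteDimensional ℝ Q] [Nontrivial Q]
    (a : V →ₗ[ℝ] V →ₗ[ℝ] ℝ) (ha : ∀ u v, a u v = a v u)
    (b : V →ₗ[ℝ] Q →ₗ[ℝ] ℝ)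
    (hZ : ∃ u : V, u ≠ 0 ∧ ∀ q : Q, b u q = 0) :
    IsLeast
      { r : ℝ | ∃ μ : ℝ, r = |μ| ∧ ∃ u : V, u ≠ 0 ∧ (∀ q : Q, b u q = 0) ∧
          ∀ v : V, (∀ q : Q, b v q = 0) → a u v = μ * (inner ℝ u v : ℝ) }
      (⨅ u : {u : V // (∀ q : Q, b u q = 0) ∧ u ≠ 0},
        ⨆ v : {v : V // (∀ q : Q, b v q = 0) ∧ v ≠ 0},
          a u.1 v.1 / (‖u.1‖ * ‖v.1‖)) := by
  obtain ⟨u₀, hu₀ne, hu₀⟩ := hZ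
  set Z : Submodule ℝ V := kerB b with hZdef
  have memZ : ∀ u : V, u ∈ Z ↔ ∀ q : Q, b u q = 0 := fun u => Iff.rfl
  haveI : Nontrivial Z := by
    exact nontrivial_of_ne ⟨u₀, hu₀⟩ 0 fun h => hu₀ne (Submodule.coe_eq_zero.2 h)
  set a' : Z →ₗ[ℝ] Z →ₗ[ℝ] ℝ := LinearMap.compl₁₂ a Z.subtype Z.subtype with ha'
  have ha'app : ∀ u v : Z, a' u v = a u.1 v.1 := fun u v => rfl
  set T : Z →ₗ[ℝ] Z := opOf a' with hTdef
  have hTin : ∀ u v : Z, (inner ℝ (T u) v : ℝ) = a u.1 v.1 := fun u v => opOf_inner a' u v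
  have hTsym : T.IsSymmetric := by
    intro x y
    rw [hTin, ha x.1 y.1, real_inner_comm, hTin]
  have hL := helper T hTsym
  -- translate eigen-equation
  have eig : ∀ (μ : ℝ) (z : Z), T z = μ • z ↔
      ∀ v : V, (∀ q : Q, b v q = 0) → a z.1 v = μ * (inner ℝ (z.1 : V) v : ℝ) := by
    intro μ z
    constructor
    · intro h v hv
      have := hTin z ⟨v, hv⟩
      rw [h, real_inner_smul_left] at this
      rw [← this, Submodule.coe_inner]
    · intro h
      have hz : ∀ w : Z, (inner ℝ (T z - μ • z) w : ℝ) = 0 := by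
        intro w
        rw [inner_sub_left, real_inner_smul_left, hTin, h w.1 w.2]
        rw [Submodule.coe_inner]
        ring
      have := hz (T z - μ • z)
      rw [inner_self_eq_zero] at this
      exact sub_eq_zero.mp this
  -- sets are equal
  have hset : { r : ℝ | ∃ μ : ℝ, r = |μ| ∧ ∃ u : V, u ≠ 0 ∧ (∀ q : Q, b u q = 0) ∧
          ∀ v : V, (∀ q : Q, b v q = 0) → a u v = μ * (inner ℝ u v : ℝ) }
      = {r : ℝ | ∃ μ : ℝ, r = |μ| ∧ ∃ z : Z, z ≠ 0 ∧ T z = μ • z} := by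
    ext r
    constructor
    · rintro ⟨μ, rfl, u, hune, huZ, heq⟩
      exact ⟨μ, rfl, ⟨u, huZ⟩, fun h => hune (Submodule.coe_eq_zero.2 h),
        (eig μ ⟨u, huZ⟩).mpr heq⟩
    · rintro ⟨μ, rfl, z, hzne, hTz⟩
      exact ⟨μ, rfl, z.1, fun h => hzne (Submodule.coe_eq_zero.1 h), z.2, (eig μ z).mp hTz⟩
  -- sup formula
  haveI hne1 : Nonempty {u : V // (∀ q : Q, b u q = 0) ∧ u ≠ 0} := ⟨⟨u₀, hu₀, hu₀ne⟩⟩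
  have hsup : ∀ u : {u : V // (∀ q : Q, b u q = 0) ∧ u ≠ 0},
      (⨆ v : {v : V // (∀ q : Q, b v q = 0) ∧ v ≠ 0},
        a u.1 v.1 / (‖u.1‖ * ‖v.1‖)) = ‖T ⟨u.1, u.2.1⟩‖ / ‖u.1‖ := by
    intro u
    set zu : Z := ⟨u.1, u.2.1⟩ with hzu
    have hupos : (0 : ℝ) < ‖u.1‖ := norm_pos_iff.mpr u.2.2
    have hub : ∀ v : {v : V // (∀ q : Q, b v q = 0) ∧ v ≠ 0},
        a u.1 v.1 / (‖u.1‖ * ‖v.1‖) ≤ ‖T zu‖ / ‖u.1‖ := by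
      intro v
      have hvpos : (0 : ℝ) < ‖v.1‖ := norm_pos_iff.mpr v.2.2
      have h1 : a u.1 v.1 = (inner ℝ ((T zu : Z) : V) v.1 : ℝ) := by
        rw [← hTin zu ⟨v.1, v.2.1⟩, Submodule.coe_inner]
      have h2 : (inner ℝ ((T zu : Z) : V) v.1 : ℝ) ≤ ‖T zu‖ * ‖v.1‖ := by
        simpa using real_inner_le_norm ((T zu : Z) : V) v.1
      rw [div_le_div_iff₀ (by positivity) hupos]
      nlinarith [norm_nonneg ((T zu : Z) : V)]
    have hbdd : BddAbove (Set.range fun v : {v : V // (∀ q : Q, b v q = 0) ∧ v ≠ 0} =>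
        a u.1 v.1 / (‖u.1‖ * ‖v.1‖)) := ⟨‖T zu‖ / ‖u.1‖, by rintro r ⟨v, rfl⟩; exact hub v⟩
    apply le_antisymm (ciSup_le hub)
    by_cases hT0 : T zu = 0
    · have : a u.1 u.1 / (‖u.1‖ * ‖u.1‖) = 0 := by
        rw [← hTin zu zu, hT0]
        simp
      calc ‖T zu‖ / ‖u.1‖ = 0 := by rw [hT0]; simp
      _ = a u.1 u.1 / (‖u.1‖ * ‖u.1‖) := this.symm
      _ ≤ _ := le_ciSup hbdd u
    · have hTv : ((T zu : Z) : V) ≠ 0 := fun h => hT0 (Submodule.coe_eq_zero.1 h)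
      have hxne : ‖(T zu : Z)‖ ≠ 0 := norm_ne_zero_iff.mpr hT0
      have hterm : a u.1 ((T zu : Z) : V) / (‖u.1‖ * ‖((T zu : Z) : V)‖)
          = ‖T zu‖ / ‖u.1‖ := by
        rw [← hTin zu (T zu), Submodule.coe_inner, real_inner_self_eq_norm_mul_norm]
        have h3 : ‖((T zu : Z) : V)‖ = ‖T zu‖ := rfl
        rw [h3, mul_comm ‖u.1‖ ‖(T zu : Z)‖, mul_div_mul_left _ _ hxne]
      calc ‖T zu‖ / ‖u.1‖
          = a u.1 ((T zu : Z) : V) / (‖u.1‖ * ‖((T zu : Z) : V)‖) := hterm.symm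
      _ ≤ _ := le_ciSup hbdd ⟨((T zu : Z) : V), (T zu).2, hTv⟩
  -- inf over the two index types agree
  have hrange : (Set.range fun u : {u : V // (∀ q : Q, b u q = 0) ∧ u ≠ 0} =>
        ‖T ⟨u.1, u.2.1⟩‖ / ‖u.1‖)
      = Set.range fun z : {z : Z // z ≠ 0} => ‖T z.1‖ / ‖z.1‖ := by
    ext r
    constructor
    · rintro ⟨u, rfl⟩
      exact ⟨⟨⟨u.1, u.2.1⟩, fun h => u.2.2 (Submodule.coe_eq_zero.2 h)⟩, rfl⟩
    · rintro ⟨z, rfl⟩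
      exact ⟨⟨z.1.1, z.1.2, fun h => z.2 (Submodule.coe_eq_zero.1 h)⟩, rfl⟩
  have hinf : (⨅ u : {u : V // (∀ q : Q, b u q = 0) ∧ u ≠ 0},
        ⨆ v : {v : V // (∀ q : Q, b v q = 0) ∧ v ≠ 0},
          a u.1 v.1 / (‖u.1‖ * ‖v.1‖))
      = ⨅ z : {z : Z // z ≠ 0}, ‖T z.1‖ / ‖z.1‖ := by
    rw [iInf_congr hsup]
    rw [iInf, iInf, hrange]
  rw [hset, hinf]
  exact hL
end

section
/- Suppose λ ∈ ℝ and u ∈ Z with u ≠ 0 satisfy a(u,v) = λ⟨u,v⟩ for all v ∈ Z. Then there exists p ∈ Q such that a(u,v) + b(v,p) + b(u,q) = λ⟨u,v⟩ for all (v,q) ∈ V × Q. -/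
/-- If `(λ, u)` is an eigenpair of the eigenvalue problem `a(u,v) = λ⟨u,v⟩` on
`Z = {u | b(u,q) = 0 ∀ q}`, then there exists `p ∈ Q` such that `(λ, (u,p))` is
an eigenpair of the extended problem
`a(u,v) + b(v,p) + b(u,q) = λ⟨u,v⟩` over `V × Q`. -/
theorem exists_pressure_extension_of_kernel_eigenpair
    {V : Type*} [NormedAddCommGroup V] [InnerProductSpace ℝ V]
    [FiniteDimensional ℝ V] [Nontrivial V]
    {Q : Type*} [NormedAddCommGroup Q] [InnerProductSpace ℝ Q]
    [FiniteDimensional ℝ Q] [Nontrivial Q]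
    (a : V →ₗ[ℝ] V →ₗ[ℝ] ℝ) (ha : ∀ u v, a u v = a v u)
    (b : V →ₗ[ℝ] Q →ₗ[ℝ] ℝ)
    (μ : ℝ) (u : V) (hu : u ≠ 0) (huZ : ∀ q : Q, b u q = 0)
    (heig : ∀ v : V, (∀ q : Q, b v q = 0) → a u v = μ * (inner ℝ u v : ℝ)) :
    ∃ p : Q, ∀ (v : V) (q : Q),
      a u v + b v p + b u q = μ * (inner ℝ u v : ℝ) := by
  classical
  -- B : V →L[ℝ] Q with ⟨B v, q⟩ = b v q
  let Blin : V →ₗ[ℝ] Q :=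
    { toFun := fun v => (InnerProductSpace.toDual ℝ Q).symm
        (LinearMap.toContinuousLinearMap (b v))
      map_add' := by
        intro x y
        apply (InnerProductSpace.toDual ℝ Q).injective
        ext q
        simp
      map_smul' := by
        intro c x
        apply (InnerProductSpace.toDual ℝ Q).injective
        ext q
        simp }
  let B : V →L[ℝ] Q := LinearMap.toContinuousLinearMap Blin
  have hB : ∀ v q, (inner ℝ (B v) q : ℝ) = b v q := by
    intro v q
    simpa [B, Blin] using
      (InnerProductSpace.toDual_symm_apply
        (𝕜 := ℝ) (E := Q) (x := q) (y := LinearMap.toContinuousLinearMap (b v)))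
  -- the functional f v = a u v - μ ⟨u, v⟩
  let flin : V →ₗ[ℝ] ℝ :=
    { toFun := fun v => a u v - μ * (inner ℝ u v : ℝ)
      map_add' := by intro x y; simp [inner_add_right]; ring
      map_smul' := by intro c x; simp [inner_smul_right]; ring }
  let w : V := (InnerProductSpace.toDual ℝ V).symm (LinearMap.toContinuousLinearMap flin)
  have hw : ∀ v, (inner ℝ w v : ℝ) = a u v - μ * (inner ℝ u v : ℝ) := by
    intro v
    simpa [w, flin] using
      (InnerProductSpace.toDual_symm_apply
        (𝕜 := ℝ) (E := V) (x := v) (y := LinearMap.toContinuousLinearMap flin))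
  -- w ∈ (ker B)ᗮ
  have hwmem : w ∈ (LinearMap.ker (B : V →ₗ[ℝ] Q))ᗮ := by
    intro v hv
    have hv' : ∀ q : Q, b v q = 0 := by
      intro q
      rw [← hB]
      simp [show B v = 0 from LinearMap.mem_ker.mp hv]
    rw [real_inner_comm, hw v, heig v hv']
    ring
  -- (ker B)ᗮ = range (adjoint B)
  have hker : (LinearMap.range (ContinuousLinearMap.adjoint B : Q →ₗ[ℝ] V))ᗮ = LinearMap.ker (B : V →ₗ[ℝ] Q) := by
    ext v
    simp only [Submodule.mem_orthogonal, LinearMap.mem_range, LinearMap.mem_ker]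
    constructor
    · intro h
      have h2 : ∀ q : Q, (inner ℝ (B v) q : ℝ) = 0 := by
        intro q
        have := h ((ContinuousLinearMap.adjoint B) q) ⟨q, rfl⟩
        rwa [ContinuousLinearMap.adjoint_inner_left, real_inner_comm] at this
      exact inner_self_eq_zero.mp (h2 (B v))
    · rintro h x ⟨q, rfl⟩
      rw [ContinuousLinearMap.coe_coe] at h
      rw [ContinuousLinearMap.coe_coe, ContinuousLinearMap.adjoint_inner_left, h, inner_zero_right]
  have hrange : (LinearMap.ker (B : V →ₗ[ℝ] Q))ᗮ = LinearMap.range (ContinuousLinearMap.adjoint B : Q →ₗ[ℝ] V) := by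
    rw [← hker, Submodule.orthogonal_orthogonal]
  rw [hrange] at hwmem
  obtain ⟨p', hp'⟩ := hwmem
  refine ⟨-p', fun v q => ?_⟩
  have hbv : b v p' = (inner ℝ w v : ℝ) := by
    rw [← hp', ContinuousLinearMap.coe_coe, ContinuousLinearMap.adjoint_inner_left, real_inner_comm, hB]
  have := hw v
  rw [huZ q, map_neg, hbv, this]
  simp
end

section
/- Let λ ∈ ℝ and (u,p) ∈ V × Q with (u,p) ≠ (0,0). Then (λ,(u,p)) is an eigenpair of Eigenproblem (I) if and only if λ ≠ 1 and (λ(1-λ)⁻¹, (u,(1-λ)p)) is an eigenpair of Eigenproblem (II). Moreover, in that case 0 ≤ λ < 1, λ(1-λ)⁻¹ ≥ 0, p ≠ 0 and (1-λ)p ≠ 0. -/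
/-- Auxiliary: structural facts extracted from Eigenproblem (I). -/
lemma eig_aux
    {V : Type*} [NormedAddCommGroup V] [InnerProductSpace ℝ V]
    {Q : Type*} [NormedAddCommGroup Q] [InnerProductSpace ℝ Q]
    (d : V →ₗ[ℝ] Q) (μ : ℝ) (u : V) (p : Q) (h0 : (u, p) ≠ (0 : V × Q))
    (hI : ∀ (v : V) (q : Q),
        (inner ℝ u v : ℝ) + (inner ℝ (d u) (d v) : ℝ) + (inner ℝ (d v) p : ℝ)
            + (inner ℝ (d u) q : ℝ)
          = -μ * (inner ℝ p q : ℝ)) :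
    d u = -(μ • p) ∧ (∀ v : V, (inner ℝ u v : ℝ) + (1 - μ) * (inner ℝ (d v) p : ℝ) = 0)
      ∧ p ≠ 0 ∧ 0 ≤ μ ∧ μ < 1 := by
  have hq : ∀ q : Q, (inner ℝ (d u) q : ℝ) = -μ * (inner ℝ p q : ℝ) := by
    intro q
    have := hI 0 q
    simpa using this
  have hdu : d u = -(μ • p) := by
    have h' : (inner ℝ (d u + μ • p) (d u + μ • p) : ℝ) = 0 := by
      rw [inner_add_left, real_inner_smul_left, hq]; ring
    have := inner_self_eq_zero.mp h'
    linear_combination (norm := abel) this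
  have hv : ∀ v : V, (inner ℝ u v : ℝ) + (1 - μ) * (inner ℝ (d v) p : ℝ) = 0 := by
    intro v
    have h := hI v 0
    have hc : (inner ℝ p (d v) : ℝ) = inner ℝ (d v) p := real_inner_comm _ _
    rw [hdu] at h
    simp only [inner_zero_right, inner_neg_left, real_inner_smul_left, hc] at h
    linarith
  have huu : (inner ℝ u u : ℝ) = μ * (1 - μ) * (inner ℝ p p : ℝ) := by
    have h := hv u
    rw [hdu] at h
    simp only [inner_neg_left, real_inner_smul_left] at h
    linarith
  have hp : p ≠ 0 := by
    intro hp0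
    subst hp0
    have huz : (inner ℝ u u : ℝ) = 0 := by simpa using huu
    have hu0 : u = 0 := inner_self_eq_zero.mp huz
    exact h0 (by simp [hu0])
  have hμ1 : μ ≠ 1 := by
    intro h1
    subst h1
    have huz : (inner ℝ u u : ℝ) = 0 := by simpa using hv u
    have hu0 : u = 0 := inner_self_eq_zero.mp huz
    apply hp
    have h2 := hdu
    rw [hu0, map_zero, one_smul] at h2
    exact neg_eq_zero.mp h2.symm
  have hpp : (0:ℝ) < inner ℝ p p := lt_of_le_of_ne real_inner_self_nonneg
    (fun h => hp (inner_self_eq_zero.mp h.symm))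
  have huu0 : (0:ℝ) ≤ inner ℝ u u := real_inner_self_nonneg
  have hμμ : 0 ≤ μ * (1 - μ) := by nlinarith
  have h0μ : 0 ≤ μ := by nlinarith
  have hμlt : μ < 1 := lt_of_le_of_ne (by nlinarith) hμ1
  exact ⟨hdu, hv, hp, h0μ, hμlt⟩

/-- `(λ,(u,p))` is an eigenpair of Eigenproblem (I)
`⟨u,v⟩ + ⟨du,dv⟩ + ⟨dv,p⟩ + ⟨du,q⟩ = -λ⟨p,q⟩`
if and only if `λ ≠ 1` and `(λ(1-λ)⁻¹, (u,(1-λ)p))` is an eigenpair of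
Eigenproblem (II) `⟨û,v⟩ + ⟨dv,p̂⟩ + ⟨dû,q⟩ = -λ̂⟨p̂,q⟩`.  Moreover in that case
`0 ≤ λ < 1`, `λ(1-λ)⁻¹ ≥ 0`, `p ≠ 0` and `(1-λ)p ≠ 0`. -/
theorem eigenproblemI_iff_eigenproblemII
    {V : Type*} [NormedAddCommGroup V] [InnerProductSpace ℝ V]
    {Q : Type*} [NormedAddCommGroup Q] [InnerProductSpace ℝ Q]
    (d : V →ₗ[ℝ] Q) (μ : ℝ) (u : V) (p : Q) (h0 : (u, p) ≠ (0 : V × Q)) :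
    ((∀ (v : V) (q : Q),
        (inner ℝ u v : ℝ) + (inner ℝ (d u) (d v) : ℝ) + (inner ℝ (d v) p : ℝ)
            + (inner ℝ (d u) q : ℝ)
          = -μ * (inner ℝ p q : ℝ))
      ↔ (μ ≠ 1 ∧ (u, (1 - μ) • p) ≠ (0 : V × Q) ∧
          ∀ (v : V) (q : Q),
            (inner ℝ u v : ℝ) + (inner ℝ (d v) ((1 - μ) • p) : ℝ)
                + (inner ℝ (d u) q : ℝ)
              = -(μ * (1 - μ)⁻¹) * (inner ℝ ((1 - μ) • p) q : ℝ)))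
    ∧ ((∀ (v : V) (q : Q),
        (inner ℝ u v : ℝ) + (inner ℝ (d u) (d v) : ℝ) + (inner ℝ (d v) p : ℝ)
            + (inner ℝ (d u) q : ℝ)
          = -μ * (inner ℝ p q : ℝ)) →
        0 ≤ μ ∧ μ < 1 ∧ 0 ≤ μ * (1 - μ)⁻¹ ∧ p ≠ 0 ∧ (1 - μ) • p ≠ 0) := by
  constructor
  · constructor
    · intro hI
      obtain ⟨hdu, hv, hp, h0μ, hμlt⟩ := eig_aux d μ u p h0 hI
      have h1 : (1 - μ) ≠ 0 := by intro h; linarith [hμlt]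
      refine ⟨by intro h; simp [h] at hμlt, ?_, ?_⟩
      · intro h
        have : (1 - μ) • p = 0 := by
          have := congrArg Prod.snd h; simpa using this
        exact hp (by simpa [h1] using smul_eq_zero.mp this)
      · intro v q
        have hq1 : (inner ℝ (d u) q : ℝ) = -μ * inner ℝ p q := by
          rw [hdu, inner_neg_left, real_inner_smul_left]; ring
        rw [real_inner_smul_right, real_inner_smul_left, hq1]
        have hinv : (1 - μ)⁻¹ * (1 - μ) = 1 := inv_mul_cancel₀ h1
        linear_combination hv v + μ * (inner ℝ p q : ℝ) * hinv
    · rintro ⟨hμ1, hne2, hII⟩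
      have h1 : (1 - μ) ≠ 0 := sub_ne_zero.mpr (Ne.symm hμ1)
      have hq : ∀ q : Q, (inner ℝ (d u) q : ℝ) = -μ * (inner ℝ p q : ℝ) := by
        intro q
        have h := hII 0 q
        simp only [inner_zero_left, map_zero, inner_zero_right, real_inner_smul_left,
          zero_add] at h
        have hinv : (1 - μ)⁻¹ * (1 - μ) = 1 := inv_mul_cancel₀ h1
        linear_combination h - μ * (inner ℝ p q : ℝ) * hinv
      have hdu : d u = -(μ • p) := by
        have h' : (inner ℝ (d u + μ • p) (d u + μ • p) : ℝ) = 0 := by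
          rw [inner_add_left, real_inner_smul_left, hq]; ring
        have := inner_self_eq_zero.mp h'
        linear_combination (norm := abel) this
      have hv : ∀ v : V, (inner ℝ u v : ℝ) + (1 - μ) * (inner ℝ (d v) p : ℝ) = 0 := by
        intro v
        have h := hII v 0
        simp only [inner_zero_right, real_inner_smul_right, add_zero] at h
        linarith
      intro v q
      have hc : (inner ℝ p (d v) : ℝ) = inner ℝ (d v) p := real_inner_comm _ _
      have hd2 : (inner ℝ (d u) (d v) : ℝ) = -μ * inner ℝ (d v) p := by
        rw [hdu, inner_neg_left, real_inner_smul_left, hc]; ring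
      rw [hd2, hq q]
      linear_combination hv v
  · intro hI
    obtain ⟨hdu, hv, hp, h0μ, hμlt⟩ := eig_aux d μ u p h0 hI
    have h1 : (0:ℝ) < 1 - μ := by linarith
    refine ⟨h0μ, hμlt, by positivity, hp, ?_⟩
    intro h
    exact hp (by simpa [ne_of_gt h1] using smul_eq_zero.mp h)
end

section
/- If (λ,(u,p)) is an eigenpair of Eigenproblem (I), then p ≠ 0, ‖u‖² = λ(1-λ)‖p‖², and 0 ≤ λ < 1. -/
/-- If `(λ,(u,p))` is an eigenpair of Eigenproblem (I)
`⟨u,v⟩ + ⟨du,dv⟩ + ⟨dv,p⟩ + ⟨du,q⟩ = -λ⟨p,q⟩`, then `p ≠ 0`,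
`‖u‖² = λ(1-λ)‖p‖²` and `0 ≤ λ < 1`. -/
theorem eigenproblemI_norm_identity
    {V : Type*} [NormedAddCommGroup V] [InnerProductSpace ℝ V]
    {Q : Type*} [NormedAddCommGroup Q] [InnerProductSpace ℝ Q]
    (d : V →ₗ[ℝ] Q) (μ : ℝ) (u : V) (p : Q) (h0 : (u, p) ≠ (0 : V × Q))
    (heig : ∀ (v : V) (q : Q),
      (inner ℝ u v : ℝ) + (inner ℝ (d u) (d v) : ℝ) + (inner ℝ (d v) p : ℝ)
          + (inner ℝ (d u) q : ℝ)
        = -μ * (inner ℝ p q : ℝ)) :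
    p ≠ 0 ∧ ‖u‖ ^ 2 = μ * (1 - μ) * ‖p‖ ^ 2 ∧ 0 ≤ μ ∧ μ < 1 := by
  have hdu : d u = (-μ) • p := by
    apply ext_inner_right ℝ
    intro q
    have h := heig 0 q
    simp only [map_zero, inner_zero_right, inner_zero_left] at h
    rw [real_inner_smul_left]
    linarith
  have hA : ∀ v : V, (inner ℝ u v : ℝ) + (1 - μ) * (inner ℝ (d v) p : ℝ) = 0 := by
    intro v
    have h := heig v 0
    simp only [inner_zero_right, hdu, real_inner_smul_left] at h
    rw [real_inner_comm p (d v)] at h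
    linear_combination h - (1 - μ) * real_inner_comm (d v) p
  have hdup : (inner ℝ (d u) p : ℝ) = -μ * ‖p‖ ^ 2 := by
    rw [hdu, real_inner_smul_left, real_inner_self_eq_norm_sq]
  have hnorm : ‖u‖ ^ 2 = μ * (1 - μ) * ‖p‖ ^ 2 := by
    have h := hA u
    rw [real_inner_self_eq_norm_sq] at h
    rw [hdup] at h
    nlinarith
  have hp : p ≠ 0 := by
    intro hp0
    apply h0
    have hu : u = 0 := by
      apply ext_inner_left ℝ
      intro v
      have h := hA v
      rw [hp0, inner_zero_right] at h
      simpa [real_inner_comm] using h.symm ▸ (by linarith : (inner ℝ u v : ℝ) = 0)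
    simp [hu, hp0, Prod.ext_iff]
  have hpn : 0 < ‖p‖ ^ 2 := by
    have := norm_pos_iff.mpr hp
    positivity
  have hμμ : 0 ≤ μ * (1 - μ) := by nlinarith [sq_nonneg ‖u‖]
  have hμne : μ ≠ 1 := by
    intro h1
    have hu : u = 0 := by
      have : ‖u‖ ^ 2 = 0 := by rw [hnorm, h1]; ring
      simpa using (pow_eq_zero_iff (by norm_num)).mp this
    apply hp
    have : d u = (-μ) • p := hdu
    rw [hu, map_zero] at this
    have := this.symm
    rw [h1] at this
    simpa using this
  refine ⟨hp, hnorm, ?_, ?_⟩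
  · nlinarith
  · rcases lt_or_eq_of_le (by nlinarith : μ ≤ 1) with h | h
    · exact h
    · exact absurd h hμne
end

section
/- If (u,p) ∈ V × Q satisfies ⟨u,v⟩ + ⟨du,dv⟩ + ⟨dv,p⟩ + ⟨du,q⟩ = -⟨p,q⟩ for all (v,q) ∈ V × Q (i.e., the relation of Eigenproblem (I) with λ = 1), then u = 0 and p = 0. In particular, λ = 1 is not an eigenvalue of Eigenproblem (I). -/
/-- If `(u,p)` satisfies the relation of Eigenproblem (I) with `λ = 1`, i.e.
`⟨u,v⟩ + ⟨du,dv⟩ + ⟨dv,p⟩ + ⟨du,q⟩ = -⟨p,q⟩` for all `(v,q)`, then `u = 0` and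
`p = 0`; in particular `λ = 1` is not an eigenvalue of Eigenproblem (I). -/
theorem eigenproblemI_one_not_eigenvalue
    {V : Type*} [NormedAddCommGroup V] [InnerProductSpace ℝ V]
    {Q : Type*} [NormedAddCommGroup Q] [InnerProductSpace ℝ Q]
    (d : V →ₗ[ℝ] Q) (u : V) (p : Q)
    (heig : ∀ (v : V) (q : Q),
      (inner ℝ u v : ℝ) + (inner ℝ (d u) (d v) : ℝ) + (inner ℝ (d v) p : ℝ)
          + (inner ℝ (d u) q : ℝ)
        = -(inner ℝ p q : ℝ)) :
    u = 0 ∧ p = 0 := by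
  have h1 := heig 0 (d u)
  have h2 := heig 0 p
  have h3 := heig u 0
  simp only [map_zero, inner_zero_left, inner_zero_right, add_zero, zero_add] at h1 h2 h3
  -- h1 : ⟪du, du⟫ = -⟪p, du⟫ ; h2 : ⟪du, p⟫ = -⟪p, p⟫
  -- h3 : ⟪u, u⟫ + ⟪du, du⟫ + ⟪du, p⟫ = 0
  have hcomm : (inner ℝ p (d u) : ℝ) = inner ℝ (d u) p := real_inner_comm _ _
  have hu : (inner ℝ u u : ℝ) = 0 := by
    have := h3
    rw [h1, hcomm, h2] at this
    linarith
  have hu0 : u = 0 := inner_self_eq_zero.mp hu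
  have hdu : d u = 0 := by rw [hu0, map_zero]
  have hp : (inner ℝ p p : ℝ) = 0 := by
    have := h2
    rw [hdu, inner_zero_left] at this
    linarith
  exact ⟨hu0, inner_self_eq_zero.mp hp⟩
end

section
/- If (λ̂,(û,p̂)) is an eigenpair of Eigenproblem (II), then λ̂ p̂ = -dû in Q, and exactly one of the following holds: either λ̂ = 0, û = 0 and ⟨p̂, dv⟩ = 0 for all v ∈ V; or λ̂ > 0, û ≠ 0 and ⟨dû, dv⟩ = λ̂⟨û, v⟩ for all v ∈ V. -/
/-- If `(λ̂,(û,p̂))` is an eigenpair of Eigenproblem (II)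
`⟨û,v⟩ + ⟨dv,p̂⟩ + ⟨dû,q⟩ = -λ̂⟨p̂,q⟩`, then `λ̂p̂ = -dû` in `Q`, and exactly one of
the following holds: either `λ̂ = 0`, `û = 0` and `⟨p̂,dv⟩ = 0` for all `v`, or
`λ̂ > 0`, `û ≠ 0` and `⟨dû,dv⟩ = λ̂⟨û,v⟩` for all `v`. -/
theorem eigenproblemII_dichotomy
    {V : Type*} [NormedAddCommGroup V] [InnerProductSpace ℝ V]
    {Q : Type*} [NormedAddCommGroup Q] [InnerProductSpace ℝ Q]
    (d : V →ₗ[ℝ] Q) (ν : ℝ) (u : V) (p : Q) (h0 : (u, p) ≠ (0 : V × Q))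
    (heig : ∀ (v : V) (q : Q),
      (inner ℝ u v : ℝ) + (inner ℝ (d v) p : ℝ) + (inner ℝ (d u) q : ℝ)
        = -ν * (inner ℝ p q : ℝ)) :
    ν • p = -d u ∧
    Xor' (ν = 0 ∧ u = 0 ∧ ∀ v : V, (inner ℝ p (d v) : ℝ) = 0)
         (0 < ν ∧ u ≠ 0 ∧ ∀ v : V, (inner ℝ (d u) (d v) : ℝ) = ν * (inner ℝ u v : ℝ)) := by
  -- from v = 0 : ⟨du, q⟩ = -ν ⟨p, q⟩
  have hq : ∀ q : Q, (inner ℝ (d u) q : ℝ) = -ν * (inner ℝ p q : ℝ) := by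
    intro q
    have := heig 0 q
    simpa using this
  -- νp = -du
  have hmain : ν • p = -d u := by
    have h1 : (inner ℝ (d u + ν • p) (d u + ν • p) : ℝ) = 0 := by
      have h := hq (d u + ν • p)
      have e : (inner ℝ (d u + ν • p) (d u + ν • p) : ℝ)
          = (inner ℝ (d u) (d u + ν • p) : ℝ) + ν * (inner ℝ p (d u + ν • p) : ℝ) := by
        rw [inner_add_left, real_inner_smul_left]
      rw [e, h]; ring
    have h2 : d u + ν • p = 0 := inner_self_eq_zero.mp h1
    rw [eq_neg_iff_add_eq_zero, add_comm]; exact h2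
  have hdu : d u = -(ν • p) := by rw [hmain, neg_neg]
  -- from q = 0 : ⟨u, v⟩ + ⟨dv, p⟩ = 0
  have hv : ∀ v : V, (inner ℝ u v : ℝ) + (inner ℝ (d v) p : ℝ) = 0 := by
    intro v
    have := heig v 0
    simpa using this
  -- ⟨du, dv⟩ = ν ⟨u, v⟩ always
  have hdd : ∀ v : V, (inner ℝ (d u) (d v) : ℝ) = ν * (inner ℝ u v : ℝ) := by
    intro v
    have h1 := hv v
    have h2 : (inner ℝ (d u) (d v) : ℝ) = -(ν * (inner ℝ (d v) p : ℝ)) := by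
      rw [hdu, inner_neg_left, real_inner_smul_left, real_inner_comm p (d v)]
    linear_combination h2 - ν * h1
  -- ‖u‖² = ν ‖p‖²
  have hnorm : (inner ℝ u u : ℝ) = ν * (inner ℝ p p : ℝ) := by
    have h1 := hv u
    have h2 : (inner ℝ (d u) p : ℝ) = -(ν * (inner ℝ p p : ℝ)) := by
      rw [hdu, inner_neg_left, real_inner_smul_left]
    linarith
  refine ⟨hmain, ?_⟩
  by_cases hu : u = 0
  · -- u = 0 case: p ≠ 0 so ν = 0
    have hp : p ≠ 0 := by
      intro hp; exact h0 (by simp [hu, hp])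
    have hppos : (0 : ℝ) < inner ℝ p p := by
      rw [real_inner_self_eq_norm_sq]
      exact pow_pos (norm_pos_iff.mpr hp) 2
    have hν : ν = 0 := by
      have h1 : (inner ℝ u u : ℝ) = 0 := by simp [hu]
      nlinarith
    left
    refine ⟨⟨hν, hu, ?_⟩, ?_⟩
    · intro v
      have := hv v
      rw [hu] at this
      simp only [inner_zero_left, zero_add] at this
      rw [real_inner_comm]
      exact this
    · rintro ⟨hν', _, _⟩
      exact absurd hν (ne_of_gt hν')
  · -- u ≠ 0 case: ν > 0
    have hupos : (0 : ℝ) < inner ℝ u u := by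
      rw [real_inner_self_eq_norm_sq]
      exact pow_pos (norm_pos_iff.mpr hu) 2
    have hν : 0 < ν := by
      rcases lt_trichotomy ν 0 with h | h | h
      · have hppos : (0 : ℝ) ≤ inner ℝ p p := real_inner_self_nonneg
        nlinarith
      · rw [h] at hnorm; linarith
      · exact h
    right
    exact ⟨⟨hν, hu, hdd⟩, by rintro ⟨h, _, _⟩; exact absurd hν (by simp [h])⟩
end
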